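/- For any group G, any 3-cocycle ω ∈ Z³(G, U(1)), and any g ∈ G, the 2-cochain Ω_g(g₁,g₂) = ω(ᵍg₁, ᵍg₂, g)·ω(g, g₁, g₂) / ω(ᵍg₁, g, g₂) satisfies dΩ_g = ω / ω^g, where ω^g(g₁,g₂,g₃) = ω(ᵍg₁, ᵍg₂, ᵍg₃) and ᵍh = ghg⁻¹. -/

import Mathlib

/-- A `U(1)`-valued 3-cocycle on a group `G` (trivial action). -/
def IsCocycle3 {G : Type*} [Group G] (ω : G → G → G → Circle) : Prop :=
  ∀ a b c d : G, ω b c d * ω a (b * c) d * ω a b c = ω (a * b) c d * ω a b (c * d)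

/-- The 2-cochain `Ω_g(g₁,g₂) = ω(ᵍg₁, ᵍg₂, g)·ω(g, g₁, g₂)/ω(ᵍg₁, g, g₂)`, where
`ᵍh = ghg⁻¹`. -/
noncomputable def OmegaCochain {G : Type*} [Group G] (ω : G → G → G → Circle) (g g₁ g₂ : G) : Circle :=
  ω (g * g₁ * g⁻¹) (g * g₂ * g⁻¹) g * ω g g₁ g₂ / ω (g * g₁ * g⁻¹) g g₂

/-- for any group `G`, 3-cocycle `ω ∈ Z³(G,U(1))` and `g ∈ G`, the 2-cochain
`Ω_g` satisfies `dΩ_g = ω/ω^g`, i.e. for all `g₁,g₂,g₃`,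
`Ω_g(g₂,g₃)·Ω_g(g₁,g₂g₃)·Ω_g(g₁g₂,g₃)⁻¹·Ω_g(g₁,g₂)⁻¹ = ω(g₁,g₂,g₃)/ω(ᵍg₁,ᵍg₂,ᵍg₃)`. -/
theorem dOmega_eq_omega_div_conj {G : Type*} [Group G] (ω : G → G → G → Circle)
    (hω : IsCocycle3 ω) (g : G) :
    ∀ g₁ g₂ g₃ : G,
      OmegaCochain ω g g₂ g₃ * OmegaCochain ω g g₁ (g₂ * g₃) *
          (OmegaCochain ω g (g₁ * g₂) g₃)⁻¹ * (OmegaCochain ω g g₁ g₂)⁻¹ =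
        ω g₁ g₂ g₃ / ω (g * g₁ * g⁻¹) (g * g₂ * g⁻¹) (g * g₃ * g⁻¹) := by
  intro g₁ g₂ g₃
  have k1 : ∀ x y : G, (g * x * g⁻¹) * (g * y * g⁻¹) = g * (x * y) * g⁻¹ := by
    intro x y; group
  have k2 : ∀ x : G, (g * x * g⁻¹) * g = g * x := by intro x; group
  have e1 := hω (g * g₁ * g⁻¹) (g * g₂ * g⁻¹) g g₃
  have e2 := hω (g * g₁ * g⁻¹) g g₂ g₃
  have e3 := hω g g₁ g₂ g₃
  have e4 := hω (g * g₁ * g⁻¹) (g * g₂ * g⁻¹) (g * g₃ * g⁻¹) g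
  rw [k1, k2] at e1
  rw [k2] at e2
  rw [k1, k1, k2] at e4
  -- pass to ℂ
  apply Subtype.ext
  have c1 := congrArg (Subtype.val : Circle → ℂ) e1
  have c2 := congrArg (Subtype.val : Circle → ℂ) e2
  have c3 := congrArg (Subtype.val : Circle → ℂ) e3
  have c4 := congrArg (Subtype.val : Circle → ℂ) e4
  simp only [OmegaCochain, Circle.coe_mul, Circle.coe_div, Circle.coe_inv] at c1 c2 c3 c4 ⊢
  have n : ∀ a b c : G, ((ω a b c : ℂ)) ≠ 0 := fun a b c => Circle.coe_ne_zero _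
  field_simp
  linear_combination
    ((ω g g₂ g₃ : ℂ) * (ω g g₁ (g₂ * g₃) : ℂ) * (ω (g * (g₁ * g₂) * g⁻¹) g g₃ : ℂ) *
        (ω (g * g₁ * g⁻¹) g g₂ : ℂ)) * c4 -
    ((ω (g * (g₁ * g₂) * g⁻¹) (g * g₃ * g⁻¹) g : ℂ) * (ω g g₂ g₃ : ℂ) *
        (ω g g₁ (g₂ * g₃) : ℂ) * (ω (g * g₁ * g⁻¹) g g₂ : ℂ)) * c1 +
    ((ω (g * (g₁ * g₂) * g⁻¹) (g * g₃ * g⁻¹) g : ℂ) * (ω (g * g₂ * g⁻¹) g g₃ : ℂ) *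
        (ω (g * g₁ * g⁻¹) (g * g₂ * g⁻¹) g : ℂ) * (ω g g₁ (g₂ * g₃) : ℂ)) * c2 -
    ((ω (g * (g₁ * g₂) * g⁻¹) (g * g₃ * g⁻¹) g : ℂ) * (ω (g * g₂ * g⁻¹) g g₃ : ℂ) *
        (ω (g * g₁ * g⁻¹) (g * g₂ * g⁻¹) g : ℂ) * (ω (g * g₁ * g⁻¹) g (g₂ * g₃) : ℂ)) * c3
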